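/- Let A ∈ M_N(ℂ) and 0 < γ < 1, and set X = exp_∘(iγA). Then the operator norm of X − 𝟏_N − iγA satisfies ‖X − 𝟏_N − iγA‖ ≤ γ² exp(‖A‖). -/

import Mathlib

open Matrix

/-- The operator norm (largest singular value) of a complex matrix, realized as the norm of
the induced linear operator on Euclidean space. -/
noncomputable def opNorm {m n : ℕ} (A : Matrix (Fin m) (Fin n) ℂ) : ℝ :=
  ‖LinearMap.toContinuousLinearMap (Matrix.toEuclideanLin A)‖

/-- The entrywise exponential of a complex matrix. -/
noncomputable def entrywiseExp {m n : ℕ} (A : Matrix (Fin m) (Fin n) ℂ) :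
    Matrix (Fin m) (Fin n) ℂ :=
  Matrix.of fun k l => Complex.exp (A k l)

/-- The `N × N` all-ones matrix. -/
def allOnes (N : ℕ) : Matrix (Fin N) (Fin N) ℂ :=
  Matrix.of fun _ _ => (1 : ℂ)

open scoped Matrix.Norms.L2Operator

lemma opNorm_eq_l2 {m n : ℕ} (A : Matrix (Fin m) (Fin n) ℂ) : opNorm A = ‖A‖ := rfl

lemma sum_sq_mulVec_le {N : ℕ} (B : Matrix (Fin N) (Fin N) ℂ) (v : Fin N → ℂ) :
    ∑ k, ‖(B *ᵥ v) k‖ ^ 2 ≤ (‖B‖ * ‖B‖) * ∑ l, ‖v l‖ ^ 2 := by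
  have h := B.l2_opNorm_mulVec ((WithLp.equiv 2 (Fin N → ℂ)).symm v)
  rw [EuclideanSpace.norm_eq, EuclideanSpace.norm_eq] at h
  have h1 : Real.sqrt (∑ k, ‖(B *ᵥ v) k‖ ^ 2) ≤ ‖B‖ * Real.sqrt (∑ l, ‖v l‖ ^ 2) := h
  calc ∑ k, ‖(B *ᵥ v) k‖ ^ 2
      = Real.sqrt (∑ k, ‖(B *ᵥ v) k‖ ^ 2) ^ 2 := (Real.sq_sqrt (by positivity)).symm
    _ ≤ (‖B‖ * Real.sqrt (∑ l, ‖v l‖ ^ 2)) ^ 2 := by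
        apply pow_le_pow_left₀ (Real.sqrt_nonneg _) h1
    _ = (‖B‖ * ‖B‖) * ∑ l, ‖v l‖ ^ 2 := by
        rw [mul_pow, Real.sq_sqrt (by positivity)]; ring

lemma sum_sq_col_le {N : ℕ} (B : Matrix (Fin N) (Fin N) ℂ) (l : Fin N) :
    ∑ j, ‖B j l‖ ^ 2 ≤ ‖B‖ * ‖B‖ := by
  have h := sum_sq_mulVec_le B (Pi.single l 1)
  have hv : ∑ l', ‖Pi.single (M := fun _ => ℂ) l 1 l'‖ ^ 2 = 1 := by
    rw [Finset.sum_eq_single l]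
    · simp
    · intro b _ hb; simp [Pi.single_eq_of_ne hb]
    · simp
  have hBv : ∀ j, (B *ᵥ Pi.single l 1) j = B j l := by
    intro j
    simp [Matrix.mulVec_single]
  simp only [hBv] at h
  rw [hv, mul_one] at h
  exact h

lemma l2_opNorm_le_of_sq {N : ℕ} (M : Matrix (Fin N) (Fin N) ℂ) (c : ℝ) (hc : 0 ≤ c)
    (h : ∀ v : Fin N → ℂ, ∑ k, ‖(M *ᵥ v) k‖ ^ 2 ≤ c ^ 2 * ∑ l, ‖v l‖ ^ 2) : ‖M‖ ≤ c := by
  rw [Matrix.l2_opNorm_def]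
  refine ContinuousLinearMap.opNorm_le_bound _ hc fun x => ?_
  have hx : (LinearEquiv.trans Matrix.toEuclideanLin LinearMap.toContinuousLinearMap M) x
      = (WithLp.equiv 2 (Fin N → ℂ)).symm (M *ᵥ (WithLp.equiv 2 (Fin N → ℂ)) x) := rfl
  rw [hx, EuclideanSpace.norm_eq, EuclideanSpace.norm_eq]
  have h2 := h ((WithLp.equiv 2 (Fin N → ℂ)) x)
  have hnn : Real.sqrt (∑ k, ‖(M *ᵥ (WithLp.equiv 2 (Fin N → ℂ)) x) k‖ ^ 2)
      ≤ Real.sqrt (c ^ 2 * ∑ l, ‖((WithLp.equiv 2 (Fin N → ℂ)) x) l‖ ^ 2) :=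
    Real.sqrt_le_sqrt h2
  refine hnn.trans ?_
  rw [Real.sqrt_mul (by positivity), Real.sqrt_sq hc]
  exact le_rfl

/-- Schur product bound: `‖A ⊙ B‖ ≤ ‖A‖ * ‖B‖`. -/
lemma l2_opNorm_hadamard {N : ℕ} (A B : Matrix (Fin N) (Fin N) ℂ) :
    ‖A ⊙ B‖ ≤ ‖A‖ * ‖B‖ := by
  refine l2_opNorm_le_of_sq _ _ (by positivity) fun v => ?_
  have key : ∀ k, ‖((A ⊙ B) *ᵥ v) k‖ ^ 2
      ≤ ∑ j, ‖(A *ᵥ (fun l => B j l * v l)) k‖ ^ 2 := by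
    intro k
    have hk : ((A ⊙ B) *ᵥ v) k = (A *ᵥ (fun l => B k l * v l)) k := by
      simp only [Matrix.mulVec, dotProduct, Matrix.hadamard_apply]
      exact Finset.sum_congr rfl fun x _ => mul_assoc _ _ _
    rw [hk]
    exact Finset.single_le_sum (f := fun j => ‖(A *ᵥ (fun l => B j l * v l)) k‖ ^ 2)
      (fun j _ => by positivity) (Finset.mem_univ k)
  calc ∑ k, ‖((A ⊙ B) *ᵥ v) k‖ ^ 2
      ≤ ∑ k, ∑ j, ‖(A *ᵥ (fun l => B j l * v l)) k‖ ^ 2 :=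
        Finset.sum_le_sum fun k _ => key k
    _ = ∑ j, ∑ k, ‖(A *ᵥ (fun l => B j l * v l)) k‖ ^ 2 := Finset.sum_comm
    _ ≤ ∑ j, (‖A‖ * ‖A‖) * ∑ l, ‖B j l * v l‖ ^ 2 :=
        Finset.sum_le_sum fun j _ => sum_sq_mulVec_le A _
    _ = (‖A‖ * ‖A‖) * ∑ l, (∑ j, ‖B j l‖ ^ 2) * ‖v l‖ ^ 2 := by
        rw [← Finset.mul_sum, Finset.sum_comm]
        congr 1
        refine Finset.sum_congr rfl fun l _ => ?_
        rw [Finset.sum_mul]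
        refine Finset.sum_congr rfl fun j _ => ?_
        rw [norm_mul, mul_pow]
    _ ≤ (‖A‖ * ‖A‖) * ∑ l, (‖B‖ * ‖B‖) * ‖v l‖ ^ 2 := by
        refine mul_le_mul_of_nonneg_left (Finset.sum_le_sum fun l _ => ?_) (by positivity)
        exact mul_le_mul_of_nonneg_right (sum_sq_col_le B l) (by positivity)
    _ = (‖A‖ * ‖B‖) ^ 2 * ∑ l, ‖v l‖ ^ 2 := by
        rw [← Finset.mul_sum]; ring

/-- Entrywise (Hadamard) power of a matrix. -/
def hadPow {N : ℕ} (C : Matrix (Fin N) (Fin N) ℂ) (n : ℕ) : Matrix (Fin N) (Fin N) ℂ :=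
  Matrix.of fun k l => (C k l) ^ n

lemma hadPow_succ {N : ℕ} (C : Matrix (Fin N) (Fin N) ℂ) (n : ℕ) :
    hadPow C (n + 1) = C ⊙ hadPow C n := by
  ext k l
  simp [hadPow, Matrix.hadamard, pow_succ]
  ring

lemma norm_hadPow_le {N : ℕ} (C : Matrix (Fin N) (Fin N) ℂ) (n : ℕ) :
    ‖hadPow C (n + 1)‖ ≤ ‖C‖ ^ (n + 1) := by
  induction n with
  | zero =>
      have : hadPow C 1 = C := by ext k l; simp [hadPow]
      rw [this, pow_one]
  | succ n ih =>
      rw [hadPow_succ]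
      calc ‖C ⊙ hadPow C (n + 1)‖ ≤ ‖C‖ * ‖hadPow C (n + 1)‖ := l2_opNorm_hadamard _ _
        _ ≤ ‖C‖ * ‖C‖ ^ (n + 1) :=
            mul_le_mul_of_nonneg_left ih (norm_nonneg _)
        _ = ‖C‖ ^ (n + 2) := by ring

/-- Entry-extraction as a continuous linear map. -/
noncomputable def entryCLM {N : ℕ} (k l : Fin N) :
    Matrix (Fin N) (Fin N) ℂ →L[ℂ] ℂ :=
  LinearMap.toContinuousLinearMap
    { toFun := fun M => M k l
      map_add' := fun _ _ => rfl
      map_smul' := fun _ _ => rfl }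

@[simp] lemma entryCLM_apply {N : ℕ} (k l : Fin N) (M : Matrix (Fin N) (Fin N) ℂ) :
    entryCLM k l M = M k l := rfl

lemma tsum_tail_exp (z : ℂ) :
    ∑' n : ℕ, (((n + 2).factorial : ℂ))⁻¹ * z ^ (n + 2) = Complex.exp z - 1 - z := by
  have hs : Summable (fun n : ℕ => z ^ n / (n.factorial : ℂ)) :=
    NormedSpace.expSeries_div_summable z
  have h := Summable.sum_add_tsum_nat_add 2 hs
  have hexp : Complex.exp z = ∑' n : ℕ, z ^ n / (n.factorial : ℂ) := by
    rw [Complex.exp_eq_exp_ℂ, NormedSpace.exp_eq_tsum_div]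
  have hrange : ∑ i ∈ Finset.range 2, z ^ i / (i.factorial : ℂ) = 1 + z := by
    simp [Finset.sum_range_succ]
  have heq : ∀ n : ℕ, (((n + 2).factorial : ℂ))⁻¹ * z ^ (n + 2)
      = z ^ (n + 2) / ((n + 2).factorial : ℂ) := fun n => by
    rw [div_eq_mul_inv, mul_comm]
  rw [tsum_congr heq]
  rw [hrange] at h
  rw [hexp, ← h]
  ring

set_option maxHeartbeats 1000000 in
theorem opNorm_entrywiseExp_sub_le {N : ℕ} (A : Matrix (Fin N) (Fin N) ℂ) (γ : ℝ)
    (hγ0 : 0 < γ) (hγ1 : γ < 1) :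
    opNorm (entrywiseExp ((Complex.I * (γ : ℂ)) • A) - allOnes N - (Complex.I * (γ : ℂ)) • A)
      ≤ γ ^ 2 * Real.exp (opNorm A) := by
  set C : Matrix (Fin N) (Fin N) ℂ := (Complex.I * (γ : ℂ)) • A with hC
  have hnormC : ‖C‖ = γ * ‖A‖ := by
    rw [hC, norm_smul]
    congr 1
    rw [norm_mul, Complex.norm_I, one_mul, Complex.norm_real,
      Real.norm_of_nonneg hγ0.le]
  set f : ℕ → Matrix (Fin N) (Fin N) ℂ :=
    fun n => ((((n + 2).factorial : ℂ))⁻¹) • hadPow C (n + 2) with hf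
  have hfn : ∀ n, ‖f n‖ ≤ γ ^ 2 * (‖A‖ ^ (n + 2) / ((n + 2).factorial : ℝ)) := by
    intro n
    rw [hf]
    simp only [norm_smul, norm_inv, Complex.norm_natCast]
    calc (((n + 2).factorial : ℝ))⁻¹ * ‖hadPow C (n + 2)‖
        ≤ (((n + 2).factorial : ℝ))⁻¹ * ‖C‖ ^ (n + 2) := by
          refine mul_le_mul_of_nonneg_left ?_ (by positivity)
          exact norm_hadPow_le C (n + 1)
      _ = γ ^ (n + 2) * (‖A‖ ^ (n + 2) / ((n + 2).factorial : ℝ)) := by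
          rw [hnormC, mul_pow]; ring
      _ ≤ γ ^ 2 * (‖A‖ ^ (n + 2) / ((n + 2).factorial : ℝ)) := by
          refine mul_le_mul_of_nonneg_right ?_ (by positivity)
          exact pow_le_pow_of_le_one hγ0.le hγ1.le (by omega)
  have hgs : Summable (fun n : ℕ => ‖A‖ ^ (n + 2) / ((n + 2).factorial : ℝ)) := by
    have := Real.summable_pow_div_factorial ‖A‖
    exact (summable_nat_add_iff 2).mpr this
  have hgs2 : Summable (fun n : ℕ => γ ^ 2 * (‖A‖ ^ (n + 2) / ((n + 2).factorial : ℝ))) :=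
    hgs.mul_left _
  have hfnorm : Summable (fun n => ‖f n‖) :=
    Summable.of_nonneg_of_le (fun n => norm_nonneg _) hfn hgs2
  have hfs : Summable f := hfnorm.of_norm
  have hM : entrywiseExp C - allOnes N - C = ∑' n, f n := by
    have hent : ∀ k l, (∑' n, f n) k l = Complex.exp (C k l) - 1 - C k l := by
      intro k l
      have h1 : entryCLM k l (∑' n, f n) = ∑' n, entryCLM k l (f n) :=
        (entryCLM k l).map_tsum hfs
      have h2 : ∀ n, entryCLM k l (f n) = (((n + 2).factorial : ℂ))⁻¹ * (C k l) ^ (n + 2) := by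
        intro n
        simp [hf, hadPow, Matrix.smul_apply, smul_eq_mul]
      rw [entryCLM_apply] at h1
      rw [h1, tsum_congr h2, tsum_tail_exp]
    ext k l
    rw [hent k l]
    simp [entrywiseExp, allOnes, Matrix.sub_apply]
  have htail : ∑' n : ℕ, ‖A‖ ^ (n + 2) / ((n + 2).factorial : ℝ) ≤ Real.exp ‖A‖ := by
    have hs : Summable (fun n : ℕ => ‖A‖ ^ n / (n.factorial : ℝ)) :=
      Real.summable_pow_div_factorial ‖A‖
    have h := Summable.sum_add_tsum_nat_add 2 hs
    have hexp : Real.exp ‖A‖ = ∑' n : ℕ, ‖A‖ ^ n / (n.factorial : ℝ) := by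
      rw [Real.exp_eq_exp_ℝ, NormedSpace.exp_eq_tsum_div]
    have hrange : (0:ℝ) ≤ ∑ i ∈ Finset.range 2, ‖A‖ ^ i / (i.factorial : ℝ) := by
      positivity
    rw [hexp, ← h]
    linarith
  have hfinal : ‖entrywiseExp C - allOnes N - C‖ ≤ γ ^ 2 * Real.exp ‖A‖ := by
    rw [hM]
    calc ‖∑' n, f n‖ ≤ ∑' n, ‖f n‖ := norm_tsum_le_tsum_norm hfnorm
      _ ≤ ∑' n : ℕ, γ ^ 2 * (‖A‖ ^ (n + 2) / ((n + 2).factorial : ℝ)) :=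
          Summable.tsum_le_tsum hfn hfnorm hgs2
      _ = γ ^ 2 * ∑' n : ℕ, ‖A‖ ^ (n + 2) / ((n + 2).factorial : ℝ) := tsum_mul_left
      _ ≤ γ ^ 2 * Real.exp ‖A‖ :=
          mul_le_mul_of_nonneg_left htail (by positivity)
  rw [opNorm_eq_l2, opNorm_eq_l2]
  exact hfinal
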